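/- (NilCoxeter relations for odd divided differences, rank computations) Define operators on the free noncommutative algebra OP_n = ℂ⟨x₁,…,xₙ⟩/(xᵢxⱼ + xⱼxᵢ for i ≠ j): the odd divided difference ∂_k determined by ∂_k(x_k) = ∂_k(x_{k+1}) = 1, ∂_k(x_j) = 0 for j ≠ k, k+1, and the twisted Leibniz rule ∂_k(fg) = ∂_k(f)g + s_k^-(f)∂_k(g), where s_k^-(f)(x₁,…,xₙ) = f(−x₁,…,−x_{k+1},−x_k,…,−xₙ) (negate all variables and swap x_k, x_{k+1}). Then ∂_k² = 0 for all 1 ≤ k ≤ n−1. -/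
import Mathlib


/-- Defining relations of the odd polynomial algebra `OP_n`:
`xᵢ xⱼ = − xⱼ xᵢ` for `i ≠ j`. -/
inductive OPRel (n : ℕ) : FreeAlgebra ℂ (Fin n) → FreeAlgebra ℂ (Fin n) → Prop
  | anticomm (i j : Fin n) (h : i ≠ j) :
      OPRel n (FreeAlgebra.ι ℂ i * FreeAlgebra.ι ℂ j) (-(FreeAlgebra.ι ℂ j * FreeAlgebra.ι ℂ i))

/-- The odd polynomial algebra `OP_n = ℂ⟨x₁,…,xₙ⟩/(xᵢxⱼ + xⱼxᵢ, i ≠ j)`. -/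
abbrev OP (n : ℕ) := RingQuot (OPRel n)

/-- The generator `xᵢ` of `OP_n`. -/
noncomputable def OPx (n : ℕ) (i : Fin n) : OP n :=
  RingQuot.mkAlgHom ℂ (OPRel n) (FreeAlgebra.ι ℂ i)

/-- odd divided differences square to zero: any linear operator `D` on
`OP_n` satisfying `D xₖ = D x_{k+1} = 1`, `D xⱼ = 0` otherwise, and the twisted Leibniz
rule `D(fg) = D(f)g + s_k⁻(f)D(g)` — where `s_k⁻` is the algebra automorphism sending
`xⱼ ↦ −x_{s_k(j)}` — satisfies `D² = 0`. -/
theorem odd_divided_difference_sq_zero (n : ℕ) (k : ℕ) (hk : k + 1 < n)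
    (s : OP n →ₐ[ℂ] OP n)
    (hs : ∀ j : Fin n,
      s (OPx n j) = -OPx n (Equiv.swap ⟨k, Nat.lt_of_succ_lt hk⟩ ⟨k + 1, hk⟩ j))
    (D : OP n →ₗ[ℂ] OP n)
    (hDk : D (OPx n ⟨k, Nat.lt_of_succ_lt hk⟩) = 1)
    (hDk1 : D (OPx n ⟨k + 1, hk⟩) = 1)
    (hD0 : ∀ j : Fin n, (j : ℕ) ≠ k → (j : ℕ) ≠ k + 1 → D (OPx n j) = 0)
    (hLeib : ∀ f g : OP n, D (f * g) = D f * g + s f * D g) :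
    ∀ f : OP n, D (D f) = 0 := by
  set K : Fin n := ⟨k, Nat.lt_of_succ_lt hk⟩ with hK
  set K1 : Fin n := ⟨k + 1, hk⟩ with hK1
  have hD1 : D 1 = 0 := by
    have h := hLeib 1 1
    simp only [one_mul, mul_one, map_one] at h
    have : D 1 + 0 = D 1 + D 1 := by rw [add_zero]; exact h
    exact (add_left_cancel this).symm
  have hnm : ∀ A B : OP n, -A * B = -(A * B) := fun A B => by exact neg_mul A B
  have hmn : ∀ A B : OP n, A * -B = -(A * B) := fun A B => by exact mul_neg A B
  have key : ∀ f : OP n, s (s f) = f ∧ D (s f) = -(s (D f)) ∧ D (D f) = 0 := by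
    intro f
    obtain ⟨a, rfl⟩ := RingQuot.mkAlgHom_surjective ℂ (OPRel n) f
    induction a using FreeAlgebra.induction with
    | grade0 r =>
        rw [AlgHom.commutes]
        have hDr : D (algebraMap ℂ (OP n) r) = 0 := by
          rw [Algebra.algebraMap_eq_smul_one, map_smul, hD1, smul_zero]
        refine ⟨by rw [AlgHom.commutes, AlgHom.commutes], ?_, ?_⟩
        · simp [AlgHom.commutes, hDr]
        · rw [hDr, map_zero]
    | grade1 i =>
        show s (s (OPx n i)) = OPx n i ∧ D (s (OPx n i)) = -(s (D (OPx n i))) ∧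
          D (D (OPx n i)) = 0
        refine ⟨by rw [hs i, map_neg, hs, neg_neg, Equiv.swap_apply_self], ?_, ?_⟩
        · by_cases h1 : (i : ℕ) = k
          · have : i = K := Fin.ext h1
            subst this
            rw [hs, Equiv.swap_apply_left, map_neg, hDk, hDk1, map_one]
          · by_cases h2 : (i : ℕ) = k + 1
            · have : i = K1 := Fin.ext h2
              subst this
              rw [hs, Equiv.swap_apply_right, map_neg, hDk1, hDk, map_one]
            · have hi : D (OPx n i) = 0 := hD0 i h1 h2
              have hswap : Equiv.swap K K1 i = i :=
                Equiv.swap_apply_of_ne_of_ne (fun h => h1 (by rw [h]))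
                  (fun h => h2 (by rw [h]))
              simp [hs, hswap, hi]
        · by_cases h1 : (i : ℕ) = k
          · have : i = K := Fin.ext h1
            subst this; rw [hDk, hD1]
          · by_cases h2 : (i : ℕ) = k + 1
            · have : i = K1 := Fin.ext h2
              subst this; rw [hDk1, hD1]
            · rw [hD0 i h1 h2, map_zero]
    | add a b iha ihb =>
        obtain ⟨ha1, ha2, ha3⟩ := iha
        obtain ⟨hb1, hb2, hb3⟩ := ihb
        rw [map_add]
        refine ⟨?_, ?_, ?_⟩
        · rw [map_add, map_add, ha1, hb1]
        · rw [map_add, map_add, map_add, map_add, ha2, hb2, neg_add]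
        · rw [map_add, map_add, ha3, hb3, add_zero]
    | mul a b iha ihb =>
        obtain ⟨ha1, ha2, ha3⟩ := iha
        obtain ⟨hb1, hb2, hb3⟩ := ihb
        rw [map_mul]
        generalize RingQuot.mkAlgHom ℂ (OPRel n) a = F at ha1 ha2 ha3 ⊢
        generalize RingQuot.mkAlgHom ℂ (OPRel n) b = G at hb1 hb2 hb3 ⊢
        refine ⟨?_, ?_, ?_⟩
        · rw [map_mul, map_mul, ha1, hb1]
        · rw [map_mul, hLeib, hLeib, ha2, ha1, hb2, map_add, map_mul, map_mul,
            ha1, neg_add]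
          rw [hnm, hmn]
        · rw [hLeib, map_add, hLeib, hLeib, ha3, ha2, ha1, hb3, zero_mul,
            mul_zero, zero_add, add_zero]
          rw [hnm, add_neg_cancel]
  exact fun f => (key f).2.2
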